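/- Let (G,w) be a finite connected edge-weighted graph and X a subgraph of G such that X is connected, V(X) = V(G), and X has a proper subgraph realizing the same quasi-flat zones hierarchy only if equal to X. If additionally the quasi-flat zones hierarchy of X equals that of G and X contains a cycle, then removing an edge of maximal weight on that cycle yields a connected spanning subgraph with the same quasi-flat zones hierarchy; hence any minimal subgraph solving problem (P₃) is a spanning tree. -/

import Mathlib

open SimpleGraph

variable {V : Type*}

/-- `P'` refines `P`: every region of `P'` is contained in a region of `P`. -/
def Refines (P' P : Set (Set V)) : Prop := ∀ R ∈ P', ∃ S ∈ P, R ⊆ S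

/-- `x` and `y` lie in the same region of `P`. -/
def SameRegion (P : Set (Set V)) (x y : V) : Prop := ∃ R ∈ P, x ∈ R ∧ y ∈ R

/-- The cut of a partition `P` for the graph `G`. -/
def cutOf (G : SimpleGraph V) (P : Set (Set V)) : Set (Sym2 V) :=
  {e | e ∈ G.edgeSet ∧ ∀ x y : V, e = s(x, y) → ¬ SameRegion P x y}

/-- The `lam`-level partition of a subgraph `X`: connected components of the
`lam`-level graph `(V(X), {u ∈ E(X) : w u < lam})`, as a set of regions. -/
def levelPartition {G : SimpleGraph V} (X : G.Subgraph) {α : Type*} [LT α]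
    (w : Sym2 V → α) (lam : α) : Set (Set V) :=
  {S | ∃ x ∈ X.verts,
    S = {y | Relation.ReflTransGen (fun a b => X.Adj a b ∧ w s(a, b) < lam) x y}}

/-- The `lam`-level partition of the graph `G` itself (quasi-flat zones at level `lam`). -/
def qfz (G : SimpleGraph V) (w : Sym2 V → ℕ) (lam : ℕ) : Set (Set V) :=
  {S | ∃ x : V,
    S = {y | Relation.ReflTransGen (fun a b => G.Adj a b ∧ w s(a, b) < lam) x y}}

/-- `(P₀, …, P_l)` is a complete hierarchy on `V`. -/
def IsCompleteHierarchy (P : ℕ → Set (Set V)) (l : ℕ) : Prop :=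
  (∀ i ≤ l, Setoid.IsPartition (P i)) ∧
  (∀ i, 1 ≤ i → i ≤ l → Refines (P (i - 1)) (P i)) ∧
  (P 0 = {S | ∃ x : V, S = {x}}) ∧
  (P l = {Set.univ})

/-- A complete hierarchy all of whose regions induce connected subgraphs of `G`. -/
def IsConnectedHierarchy (G : SimpleGraph V) (P : ℕ → Set (Set V)) (l : ℕ) : Prop :=
  IsCompleteHierarchy P l ∧ ∀ i ≤ l, ∀ S ∈ P i, (G.induce S).Connected

/-- The saliency map of the hierarchy `(P₀, …, P_l)`:
`Φ(H)(u) = max {lam ≤ l : u ∈ φ(P lam)}`. -/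
noncomputable def saliency (G : SimpleGraph V) (P : ℕ → Set (Set V)) (l : ℕ)
    (e : Sym2 V) : ℕ :=
  sSup {lam | lam ≤ l ∧ e ∈ cutOf G (P lam)}

/-- `w` is a saliency map on `G`: the saliency map of some connected complete
hierarchy of depth `|E|`. -/
def IsSaliencyMap (G : SimpleGraph V) [Fintype G.edgeSet] (w : Sym2 V → ℕ) : Prop :=
  ∃ P : ℕ → Set (Set V), IsConnectedHierarchy G P G.edgeFinset.card ∧
    ∀ e ∈ G.edgeSet, w e = saliency G P G.edgeFinset.card e

/-- Total weight of a subgraph. -/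
noncomputable def sgWeight [Fintype V] {G : SimpleGraph V} {α : Type*}
    [AddCommMonoid α] (X : G.Subgraph) (w : Sym2 V → α) : α :=
  ∑ e ∈ (Set.toFinite X.edgeSet).toFinset, w e

/-- `X` is a minimum spanning tree of `(G, w)`. -/
def IsMST [Fintype V] {G : SimpleGraph V} {α : Type*} [AddCommMonoid α] [Preorder α]
    (X : G.Subgraph) (w : Sym2 V → α) : Prop :=
  X.verts = Set.univ ∧ X.Connected ∧
  ∀ Y : G.Subgraph, Y.verts = Set.univ → Y.Connected → sgWeight X w ≤ sgWeight Y w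


section Helpers
variable {V : Type*}

lemma rtg_mono' {α : Type*} {r p : α → α → Prop} {a b : α} (h : ∀ a b, r a b → p a b)
    (hab : Relation.ReflTransGen r a b) : Relation.ReflTransGen p a b :=
  Relation.ReflTransGen.mono (r := r) (p := p) h _ _ hab

/-- walk with all edges satisfying a predicate gives ReflTransGen. -/
lemma walk_rtg {H : SimpleGraph V} (pred : Sym2 V → Prop) :
    ∀ {u u' : V} (q : H.Walk u u'), (∀ f ∈ q.edges, pred f) →
    Relation.ReflTransGen (fun x y => H.Adj x y ∧ pred s(x,y)) u u' := by
  intro u u' q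
  induction q with
  | nil => intro _; exact Relation.ReflTransGen.refl
  | cons h q ih =>
    intro hall
    refine Relation.ReflTransGen.head ⟨h, hall _ ?_⟩ (ih fun f hf => hall _ ?_)
    · simp [SimpleGraph.Walk.edges_cons]
    · simp [SimpleGraph.Walk.edges_cons, hf]

lemma split_lemma {H : SimpleGraph V} (a b : V) :
    ∀ {x y : V} (p : H.Walk x y), p.edges.Nodup → s(a,b) ∈ p.edges →
    (Relation.ReflTransGen
        (fun u u' => H.Adj u u' ∧ (s(u,u') ∈ p.edges ∧ s(u,u') ≠ s(a,b))) x a ∧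
      Relation.ReflTransGen
        (fun u u' => H.Adj u u' ∧ (s(u,u') ∈ p.edges ∧ s(u,u') ≠ s(a,b))) b y) ∨
    (Relation.ReflTransGen
        (fun u u' => H.Adj u u' ∧ (s(u,u') ∈ p.edges ∧ s(u,u') ≠ s(a,b))) x b ∧
      Relation.ReflTransGen
        (fun u u' => H.Adj u u' ∧ (s(u,u') ∈ p.edges ∧ s(u,u') ≠ s(a,b))) a y) := by
  intro x y p
  induction p with
  | nil => intro _ hmem; simp at hmem
  | @cons x x₁ y h q ih =>
    intro hnd hmem
    rw [SimpleGraph.Walk.edges_cons] at hmem hnd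
    have hnd' := (List.nodup_cons.mp hnd).2
    have hnotin := (List.nodup_cons.mp hnd).1
    rcases List.mem_cons.mp hmem with heq | hmem'
    · -- first edge is s(a,b)
      have hq : ∀ f ∈ q.edges, f ∈ (s(x,x₁) :: q.edges : List (Sym2 V)) ∧ f ≠ s(a,b) := by
        intro f hf
        refine ⟨List.mem_cons_of_mem _ hf, ?_⟩
        intro hfe; rw [hfe, heq] at hf; exact hnotin hf
      have hw := walk_rtg (fun f => f ∈ (s(x,x₁) :: q.edges : List (Sym2 V)) ∧ f ≠ s(a,b)) q hq
      rcases Sym2.eq_iff.mp heq.symm with ⟨rfl, rfl⟩ | ⟨rfl, rfl⟩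
      · exact Or.inl ⟨Relation.ReflTransGen.refl, hw⟩
      · exact Or.inr ⟨Relation.ReflTransGen.refl, hw⟩
    · -- s(a,b) in q
      have step : H.Adj x x₁ ∧ (s(x,x₁) ∈ (s(x,x₁) :: q.edges : List (Sym2 V)) ∧ s(x,x₁) ≠ s(a,b)) := by
        refine ⟨h, List.mem_cons_self, ?_⟩
        intro hfe; rw [← hfe] at hmem'; exact hnotin hmem'
      have mono : ∀ {u u'}, Relation.ReflTransGen
          (fun u u' => H.Adj u u' ∧ (s(u,u') ∈ q.edges ∧ s(u,u') ≠ s(a,b))) u u' →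
          Relation.ReflTransGen
          (fun u u' => H.Adj u u' ∧ (s(u,u') ∈ (s(x,x₁) :: q.edges : List (Sym2 V)) ∧ s(u,u') ≠ s(a,b))) u u' := by
        intro u u' hr
        exact rtg_mono' (fun u u' ⟨h1, h2, h3⟩ => ⟨h1, List.mem_cons_of_mem _ h2, h3⟩) hr
      rcases ih hnd' hmem' with ⟨h1, h2⟩ | ⟨h1, h2⟩
      · exact Or.inl ⟨Relation.ReflTransGen.head step (mono h1), mono h2⟩
      · exact Or.inr ⟨Relation.ReflTransGen.head step (mono h1), mono h2⟩

end Helpers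

section Main
variable {V : Type*}

lemma rtg_symm_subgraph {G : SimpleGraph V} (Y : G.Subgraph) {α : Type*} [LT α]
    (w : Sym2 V → α) (lam : α) :
    Symmetric (Relation.ReflTransGen (fun a b => Y.Adj a b ∧ w s(a,b) < lam)) :=
  fun a b h => by
    haveI : Std.Symm (fun a b => Y.Adj a b ∧ w s(a,b) < lam) :=
      ⟨fun a b ⟨h1, h2⟩ => ⟨h1.symm, by rwa [Sym2.eq_swap]⟩⟩
    exact Std.Symm.symm a b h

/-- Lemma K: same partitions as ⊤ at all levels ⇒ connected and spanning. -/
lemma K_lemma [Fintype V] {G : SimpleGraph V} (hG : G.Connected) (w : Sym2 V → NNReal)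
    (Y : G.Subgraph)
    (h : ∀ lam : NNReal, levelPartition Y w lam = levelPartition (⊤ : G.Subgraph) w lam) :
    Y.Connected ∧ Y.verts = Set.univ := by
  classical
  set lam : NNReal := (Finset.univ.sup w) + 1 with hlam
  have hwl : ∀ s : Sym2 V, w s < lam := fun s =>
    lt_of_le_of_lt (Finset.le_sup (Finset.mem_univ s)) (lt_add_of_pos_right _ one_pos)
  have htop : levelPartition (⊤ : G.Subgraph) w lam = {Set.univ} := by
    have hreach : ∀ x : V,
        {y | Relation.ReflTransGen (fun a b => (⊤ : G.Subgraph).Adj a b ∧ w s(a,b) < lam) x y}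
          = Set.univ := by
      intro x
      ext y
      simp only [Set.mem_univ, Set.mem_setOf_eq, iff_true]
      obtain ⟨p⟩ := hG.preconnected x y
      have := walk_rtg (H := G) (fun _ => True) p (fun _ _ => trivial)
      exact rtg_mono' (fun a b ⟨h1, _⟩ => ⟨by simpa using h1, hwl _⟩) this
    ext S
    constructor
    · rintro ⟨x, _, rfl⟩
      rw [Set.mem_singleton_iff]
      exact hreach x
    · rintro rfl
      obtain ⟨x⟩ := hG.nonempty
      exact ⟨x, by simp, (hreach x).symm⟩
  have huniv : Set.univ ∈ levelPartition Y w lam := by rw [h lam, htop]; rfl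
  obtain ⟨x, hx, hS⟩ := huniv
  have hmem : ∀ y : V, y ∈ Y.verts ∧
      Relation.ReflTransGen (fun a b => Y.Adj a b ∧ w s(a,b) < lam) x y := by
    intro y
    have hy : Relation.ReflTransGen (fun a b => Y.Adj a b ∧ w s(a,b) < lam) x y := by
      have : y ∈ (Set.univ : Set V) := Set.mem_univ y
      rw [hS] at this; exact this
    refine ⟨?_, hy⟩
    induction hy with
    | refl => exact hx
    | tail _ hstep _ => exact hstep.1.snd_mem
  have hverts : Y.verts = Set.univ := Set.eq_univ_of_forall (fun y => (hmem y).1)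
  refine ⟨?_, hverts⟩
  rw [Subgraph.connected_iff]
  have lift : ∀ (u v : V) (_ : Relation.ReflTransGen
      (fun a b => Y.Adj a b ∧ w s(a,b) < lam) u v) (hu : u ∈ Y.verts) (hv : v ∈ Y.verts),
      Y.coe.Reachable ⟨u, hu⟩ ⟨v, hv⟩ := by
    intro u v huv
    induction huv with
    | refl => intro hu hv; rfl
    | @tail b c _ hstep ih =>
      intro hu hv
      exact (ih hu hstep.1.fst_mem).trans (Adj.reachable (by exact hstep.1))
  refine ⟨⟨?_⟩, ⟨x, hx⟩⟩
  rintro ⟨u, hu⟩ ⟨v, hv⟩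
  exact ((lift x u (hmem u).2 hx hu).symm).trans (lift x v (hmem v).2 hx hv)

/-- Core: deleting a max-weight cycle edge preserves each level partition. -/
lemma core_eq {G : SimpleGraph V} (w : Sym2 V → NNReal) (X : G.Subgraph)
    (v : V) (c : X.spanningCoe.Walk v v) (hc : c.IsCycle)
    (e : Sym2 V) (he : e ∈ c.edges) (hmax : ∀ e' ∈ c.edges, w e' ≤ w e) (lam : NNReal) :
    levelPartition (X.deleteEdges {e}) w lam = levelPartition X w lam := by
  have key : ∀ u u', Relation.ReflTransGen
      (fun a b => (X.deleteEdges {e}).Adj a b ∧ w s(a,b) < lam) u u' ↔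
      Relation.ReflTransGen (fun a b => X.Adj a b ∧ w s(a,b) < lam) u u' := by
    intro u u'
    constructor
    · exact fun h => rtg_mono' (fun a b ⟨h1, h2⟩ => ⟨((Subgraph.deleteEdges_adj _ _ _).mp h1).1, h2⟩) h
    · intro h
      induction h with
      | refl => exact Relation.ReflTransGen.refl
      | @tail b d _ hstep ih =>
        refine ih.trans ?_
        by_cases hbd : s(b, d) = e
        · -- replace by path around the cycle
          have hwe : w e < lam := by rw [← hbd]; exact hstep.2
          have hL := split_lemma (H := X.spanningCoe) b d c hc.edges_nodup (hbd ▸ he)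
          set R := fun a b' => (X.deleteEdges {e}).Adj a b' ∧ w s(a,b') < lam with hR
          have hmono : ∀ {p q : V}, Relation.ReflTransGen
              (fun a b' => X.spanningCoe.Adj a b' ∧ (s(a,b') ∈ c.edges ∧ s(a,b') ≠ s(b,d))) p q →
              Relation.ReflTransGen R p q := by
            intro p q hpq
            refine rtg_mono' (fun a b' ⟨h1, h2, h3⟩ => ?_) hpq
            refine ⟨(Subgraph.deleteEdges_adj _ _ _).mpr ⟨h1, ?_⟩, lt_of_le_of_lt (hmax _ h2) hwe⟩
            simp only [Set.mem_singleton_iff]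
            rw [hbd] at h3; exact h3
          have hsymm : Symmetric (Relation.ReflTransGen R) := rtg_symm_subgraph _ w lam
          rcases hL with ⟨h1, h2⟩ | ⟨h1, h2⟩
          · exact (hsymm (hmono h1)).trans (hsymm (hmono h2))
          · exact (hmono h2).trans (hmono h1)
        · exact Relation.ReflTransGen.single
            ⟨(Subgraph.deleteEdges_adj _ _ _).mpr ⟨hstep.1, by simpa using hbd⟩, hstep.2⟩
  unfold levelPartition
  rw [Subgraph.deleteEdges_verts]
  ext S
  constructor
  · rintro ⟨x, hx, rfl⟩
    exact ⟨x, hx, Set.ext fun y => key x y⟩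
  · rintro ⟨x, hx, rfl⟩
    exact ⟨x, hx, Set.ext fun y => (key x y).symm⟩

end Main

/-- removing a maximal-weight edge of a cycle of a connected spanning
subgraph with the same quasi-flat zones hierarchy as `G` keeps it connected, spanning,
and with the same quasi-flat zones hierarchy; hence any minimal subgraph solving
problem (P₃) is a spanning tree. -/
theorem minimal_qfz_is_spanning_tree [Fintype V] (G : SimpleGraph V)
    (hG : G.Connected) (w : Sym2 V → NNReal) :
    (∀ X : G.Subgraph, X.Connected → X.verts = Set.univ →
      (∀ lam : NNReal, levelPartition X w lam = levelPartition (⊤ : G.Subgraph) w lam) →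
      ∀ (v : V) (c : X.spanningCoe.Walk v v), c.IsCycle →
        ∀ e ∈ c.edges, (∀ e' ∈ c.edges, w e' ≤ w e) →
          (X.deleteEdges {e}).Connected ∧ (X.deleteEdges {e}).verts = Set.univ ∧
          ∀ lam : NNReal,
            levelPartition (X.deleteEdges {e}) w lam =
              levelPartition (⊤ : G.Subgraph) w lam) ∧
    (∀ X : G.Subgraph,
      (∀ lam : NNReal, levelPartition X w lam = levelPartition (⊤ : G.Subgraph) w lam) →
      (∀ Y : G.Subgraph, Y ≤ X →
        (∀ lam : NNReal, levelPartition Y w lam = levelPartition (⊤ : G.Subgraph) w lam) →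
        Y = X) →
      X.Connected ∧ X.verts = Set.univ ∧ X.spanningCoe.IsAcyclic) := by
  constructor
  · intro X _ _ hXp v c hc e he hmax
    have hlp : ∀ lam : NNReal,
        levelPartition (X.deleteEdges {e}) w lam = levelPartition (⊤ : G.Subgraph) w lam :=
      fun lam => (core_eq w X v c hc e he hmax lam).trans (hXp lam)
    obtain ⟨hcon, hv⟩ := K_lemma hG w _ hlp
    exact ⟨hcon, hv, hlp⟩
  · intro X hXp hmin
    obtain ⟨hcon, hv⟩ := K_lemma hG w X hXp
    refine ⟨hcon, hv, ?_⟩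
    intro v c hc
    classical
    have hne : c.edges.toFinset.Nonempty := by
      have h3 := hc.three_le_length
      have : c.edges ≠ [] := by
        intro h
        have := c.length_edges
        rw [h] at this
        simp at this
        omega
      rcases List.exists_mem_of_ne_nil _ this with ⟨f, hf⟩
      exact ⟨f, List.mem_toFinset.mpr hf⟩
    obtain ⟨e, heT, hmaxT⟩ := c.edges.toFinset.exists_max_image w hne
    have he : e ∈ c.edges := List.mem_toFinset.mp heT
    have hmax : ∀ e' ∈ c.edges, w e' ≤ w e := fun e' h' => hmaxT e' (List.mem_toFinset.mpr h')
    have hYp : ∀ lam : NNReal,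
        levelPartition (X.deleteEdges {e}) w lam = levelPartition (⊤ : G.Subgraph) w lam :=
      fun lam => (core_eq w X v c hc e he hmax lam).trans (hXp lam)
    have hYX : X.deleteEdges {e} = X :=
      hmin _ (Subgraph.deleteEdges_le _) hYp
    induction e with
    | _ a b =>
      have hadj : X.Adj a b := by
        have := SimpleGraph.Walk.adj_of_mem_edges c he
        simpa using this
      have : (X.deleteEdges {s(a,b)}).Adj a b := by rw [hYX]; exact hadj
      rw [Subgraph.deleteEdges_adj] at this
      simp at this
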